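/- Let H be a symmetric positive semidefinite d×d matrix, γ > 0 with γ Tr(H) ≤ 1, and η_0 ∈ R^d. Define η_k = (I − γH)^k η_0 and its average η̄_{K−1} = (1/K)Σ_{k=0}^{K−1} η_k. Then ⟨η̄_{K−1}, H η̄_{K−1}⟩ ≤ ‖η_0‖² / (γK). -/

import Mathlib

open Matrix

private lemma dot_mulVec_left {d : ℕ} (M : Matrix (Fin d) (Fin d) ℝ) (x y : Fin d → ℝ) :
    (M *ᵥ x) ⬝ᵥ y = x ⬝ᵥ (Mᵀ *ᵥ y) := by
  rw [dotProduct_mulVec, vecMul_transpose, dotProduct_comm]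

private lemma psd_dot_nonneg {d : ℕ} {M : Matrix (Fin d) (Fin d) ℝ} (hM : M.PosSemidef)
    (x : Fin d → ℝ) : 0 ≤ x ⬝ᵥ (M *ᵥ x) := by
  simpa using hM.dotProduct_mulVec_nonneg x

open scoped MatrixOrder in
private lemma one_sub_smul_psd {d : ℕ} (H : Matrix (Fin d) (Fin d) ℝ) (γ : ℝ)
    (hH : H.PosSemidef) (hγ : 0 ≤ γ) (htr : γ * H.trace ≤ 1) :
    ((1 : Matrix (Fin d) (Fin d) ℝ) - γ • H).PosSemidef := by
  obtain ⟨B, hB⟩ := CStarAlgebra.nonneg_iff_eq_star_mul_self.mp hH.nonneg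
  rw [Matrix.star_eq_conjTranspose] at hB
  refine .of_dotProduct_mulVec_nonneg ?_ ?_
  · exact (Matrix.isHermitian_one.sub (by rw [Matrix.IsHermitian, Matrix.conjTranspose_smul, hH.1.eq, star_trivial] : (γ • H).IsHermitian))
  · intro x
    have hstar : star x = x := by simp
    rw [hstar]
    have hdot : x ⬝ᵥ (H *ᵥ x) = (B *ᵥ x) ⬝ᵥ (B *ᵥ x) := by
      rw [hB, ← mulVec_mulVec, dotProduct_mulVec, vecMul_conjTranspose]
      simp
    have htrace : H.trace = ∑ j, ∑ i, (B j i) ^ 2 := by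
      rw [hB]
      simp only [Matrix.trace, Matrix.diag, Matrix.mul_apply, Matrix.conjTranspose_apply]
      rw [Finset.sum_comm]
      simp [sq]
    have hcs : (B *ᵥ x) ⬝ᵥ (B *ᵥ x) ≤ H.trace * (x ⬝ᵥ x) := by
      rw [htrace, Finset.sum_mul]
      simp only [dotProduct, Matrix.mulVec]
      refine Finset.sum_le_sum fun j _ => ?_
      have := Finset.sum_mul_sq_le_sq_mul_sq Finset.univ (fun i => B j i) x
      calc (∑ i, B j i * x i) * (∑ i, B j i * x i)
          = (∑ i, B j i * x i) ^ 2 := by ring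
        _ ≤ (∑ i, (B j i) ^ 2) * ∑ i, (x i) ^ 2 := this
        _ = (∑ i, (B j i) ^ 2) * ∑ i, x i * x i := by simp [sq]
    have hxx : 0 ≤ x ⬝ᵥ x := by simpa using dotProduct_star_self_nonneg x
    have : γ * (x ⬝ᵥ (H *ᵥ x)) ≤ x ⬝ᵥ x := by
      calc γ * (x ⬝ᵥ (H *ᵥ x)) ≤ γ * (H.trace * (x ⬝ᵥ x)) := by
            rw [hdot]; exact mul_le_mul_of_nonneg_left hcs hγ
        _ = (γ * H.trace) * (x ⬝ᵥ x) := by ring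
        _ ≤ 1 * (x ⬝ᵥ x) := mul_le_mul_of_nonneg_right htr hxx
        _ = x ⬝ᵥ x := one_mul _
    have hexp : x ⬝ᵥ (((1 : Matrix (Fin d) (Fin d) ℝ) - γ • H) *ᵥ x)
        = x ⬝ᵥ x - γ * (x ⬝ᵥ (H *ᵥ x)) := by
      rw [Matrix.sub_mulVec, dotProduct_sub]
      simp [Matrix.smul_mulVec]
    rw [hexp]
    linarith

open scoped MatrixOrder in
private lemma one_sub_pow_psd {d : ℕ} {A : Matrix (Fin d) (Fin d) ℝ} (hA : A.PosSemidef)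
    (h1A : ((1 : Matrix (Fin d) (Fin d) ℝ) - A).PosSemidef) (k : ℕ) :
    ((1 : Matrix (Fin d) (Fin d) ℝ) - A ^ k).PosSemidef := by
  induction k with
  | zero => simpa using Matrix.PosSemidef.zero
  | succ k ih =>
    have h := CFC.sqrt_mul_sqrt_self A hA.nonneg
    have hcomm : Commute (CFC.sqrt A) A := by
      unfold Commute SemiconjBy
      calc CFC.sqrt A * A = CFC.sqrt A * (CFC.sqrt A * CFC.sqrt A) := by rw [h]
        _ = (CFC.sqrt A * CFC.sqrt A) * CFC.sqrt A := by rw [mul_assoc]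
        _ = A * CFC.sqrt A := by rw [h]
    have hcommk : CFC.sqrt A * A ^ k = A ^ k * CFC.sqrt A := (hcomm.pow_right k)
    have key : (1 : Matrix (Fin d) (Fin d) ℝ) - A ^ (k + 1)
        = (1 - A) + CFC.sqrt A * (1 - A ^ k) * CFC.sqrt A := by
      rw [mul_sub, sub_mul, mul_one, h, hcommk, mul_assoc, h, ← pow_succ]
      abel
    rw [key]
    have := ih.mul_mul_conjTranspose_same (CFC.sqrt A)
    rw [(CFC.sqrt_nonneg A).posSemidef.1.eq] at this
    exact h1A.add this

private lemma sum_mulVec' {d : ℕ} {ι : Type*} (s : Finset ι)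
    (M : ι → Matrix (Fin d) (Fin d) ℝ) (v : Fin d → ℝ) :
    (∑ k ∈ s, M k) *ᵥ v = ∑ k ∈ s, (M k) *ᵥ v := by
  induction s using Finset.cons_induction with
  | empty => simp
  | cons a s ha ih => rw [Finset.sum_cons, Finset.sum_cons, Matrix.add_mulVec, ih]

private lemma dotProduct_sum' {d : ℕ} {ι : Type*} (s : Finset ι)
    (v : Fin d → ℝ) (w : ι → Fin d → ℝ) :
    v ⬝ᵥ (∑ k ∈ s, w k) = ∑ k ∈ s, v ⬝ᵥ w k := by
  induction s using Finset.cons_induction with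
  | empty => simp
  | cons a s ha ih => rw [Finset.sum_cons, Finset.sum_cons, dotProduct_add, ih]

/-- Let `H` be symmetric positive semidefinite, `γ > 0` with `γ Tr(H) ≤ 1`, and
`η₀ ∈ ℝ^d`. With `η_k = (I − γH)^k η₀` and `η̄_{K−1} = (1/K) Σ_{k=0}^{K−1} η_k`, one has
`⟨η̄_{K−1}, H η̄_{K−1}⟩ ≤ ‖η₀‖² / (γ K)`. -/
theorem averaged_gd_initial_condition_bound' (d : ℕ) (H : Matrix (Fin d) (Fin d) ℝ)
    (γ : ℝ) (η₀ : Fin d → ℝ) (hH : H.PosSemidef) (hγ : 0 < γ)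
    (htr : γ * H.trace ≤ 1) (K : ℕ) (hK : 1 ≤ K) :
    ((K : ℝ)⁻¹ • ∑ k ∈ Finset.range K,
        (((1 : Matrix (Fin d) (Fin d) ℝ) - γ • H) ^ k) *ᵥ η₀) ⬝ᵥ
      (H *ᵥ ((K : ℝ)⁻¹ • ∑ k ∈ Finset.range K,
        (((1 : Matrix (Fin d) (Fin d) ℝ) - γ • H) ^ k) *ᵥ η₀))
    ≤ (η₀ ⬝ᵥ η₀) / (γ * (K : ℝ)) := by
  set A : Matrix (Fin d) (Fin d) ℝ := (1 : Matrix (Fin d) (Fin d) ℝ) - γ • H with hAdef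
  set S : Matrix (Fin d) (Fin d) ℝ := ∑ k ∈ Finset.range K, A ^ k with hSdef
  have hA : A.PosSemidef := one_sub_smul_psd H γ hH hγ.le htr
  have hγH : (γ • H).PosSemidef := by
    refine .of_dotProduct_mulVec_nonneg (by rw [Matrix.IsHermitian, Matrix.conjTranspose_smul, hH.1.eq, star_trivial]) ?_
    intro x
    rw [Matrix.smul_mulVec, dotProduct_smul]
    exact smul_nonneg hγ.le (hH.dotProduct_mulVec_nonneg x)
  have hsub : (1 : Matrix (Fin d) (Fin d) ℝ) - A = γ • H := by rw [hAdef, sub_sub_cancel]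
  have h1A : ((1 : Matrix (Fin d) (Fin d) ℝ) - A).PosSemidef := by rw [hsub]; exact hγH
  -- rewrite the averaged vector
  rw [(sum_mulVec' (Finset.range K) (fun k => A ^ k) η₀).symm]
  set u : Fin d → ℝ := S *ᵥ η₀ with hu
  set Q : ℝ := u ⬝ᵥ (H *ᵥ u) with hQ
  have hLHS : ((K : ℝ)⁻¹ • u) ⬝ᵥ (H *ᵥ ((K : ℝ)⁻¹ • u)) = (K : ℝ)⁻¹ * ((K : ℝ)⁻¹ * Q) := by
    rw [Matrix.mulVec_smul, smul_dotProduct, dotProduct_smul]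
    simp [hQ, smul_eq_mul]
  rw [hLHS]
  -- symmetry of S
  have hAsymm : Aᵀ = A := by
    have := hA.1.eq
    rwa [Matrix.conjTranspose_eq_transpose_of_trivial] at this
  have hSsymm : Sᵀ = S := by
    rw [hSdef, Matrix.transpose_sum]
    exact Finset.sum_congr rfl fun k _ => by rw [Matrix.transpose_pow, hAsymm]
  -- geometric sum identity
  have hgeo : ((1 : Matrix (Fin d) (Fin d) ℝ) - A) * S = 1 - A ^ K := by
    rw [← neg_sub A 1, neg_mul, mul_geom_sum, neg_sub]
  -- express Q
  have hQeq : Q = η₀ ⬝ᵥ ((S * (H * S)) *ᵥ η₀) := by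
    rw [hQ, hu, Matrix.mulVec_mulVec, dot_mulVec_left, hSsymm, Matrix.mulVec_mulVec]
  have hkey : γ • (S * (H * S)) = ∑ k ∈ Finset.range K, (A ^ k - A ^ (k + K)) := by
    have h1 : γ • (S * (H * S)) = S * (((1 : Matrix (Fin d) (Fin d) ℝ) - A) * S) := by
      rw [← Matrix.mul_smul, ← Matrix.smul_mul, hsub]
    rw [h1, hgeo, mul_sub, mul_one, hSdef, Finset.sum_mul, ← Finset.sum_sub_distrib]
    exact Finset.sum_congr rfl fun k _ => by rw [← pow_add]
  have hterm : ∀ k, η₀ ⬝ᵥ ((A ^ k - A ^ (k + K)) *ᵥ η₀) ≤ η₀ ⬝ᵥ η₀ := by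
    intro k
    have hpsd : (((1 : Matrix (Fin d) (Fin d) ℝ) - A ^ k) + A ^ (k + K)).PosSemidef :=
      (one_sub_pow_psd hA h1A k).add (hA.pow (k + K))
    have h0 := psd_dot_nonneg hpsd η₀
    rw [Matrix.add_mulVec, Matrix.sub_mulVec, Matrix.one_mulVec, dotProduct_add,
      dotProduct_sub] at h0
    rw [Matrix.sub_mulVec, dotProduct_sub]
    linarith
  have hγQ : γ * Q ≤ (K : ℝ) * (η₀ ⬝ᵥ η₀) := by
    have : γ * Q = η₀ ⬝ᵥ ((γ • (S * (H * S))) *ᵥ η₀) := by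
      rw [hQeq, Matrix.smul_mulVec, dotProduct_smul, smul_eq_mul]
    rw [this, hkey]
    rw [sum_mulVec', dotProduct_sum']
    calc ∑ k ∈ Finset.range K, η₀ ⬝ᵥ ((A ^ k - A ^ (k + K)) *ᵥ η₀)
        ≤ ∑ _k ∈ Finset.range K, η₀ ⬝ᵥ η₀ := Finset.sum_le_sum fun k _ => hterm k
      _ = (K : ℝ) * (η₀ ⬝ᵥ η₀) := by rw [Finset.sum_const, Finset.card_range]; simp
  have hK0 : (0 : ℝ) < (K : ℝ) := by exact_mod_cast Nat.lt_of_lt_of_le Nat.zero_lt_one hK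
  rw [div_eq_mul_inv, mul_inv]
  have hQnn : 0 ≤ Q := by rw [hQ]; exact psd_dot_nonneg hH u
  have step : (K : ℝ)⁻¹ * Q ≤ (η₀ ⬝ᵥ η₀) * γ⁻¹ := by
    rw [inv_mul_le_iff₀ hK0]
    calc Q = γ⁻¹ * (γ * Q) := by field_simp
      _ ≤ γ⁻¹ * ((K : ℝ) * (η₀ ⬝ᵥ η₀)) := by
          exact mul_le_mul_of_nonneg_left hγQ (inv_nonneg.mpr hγ.le)
      _ = (K : ℝ) * ((η₀ ⬝ᵥ η₀) * γ⁻¹) := by ring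
  calc (K : ℝ)⁻¹ * ((K : ℝ)⁻¹ * Q)
      ≤ (K : ℝ)⁻¹ * ((η₀ ⬝ᵥ η₀) * γ⁻¹) :=
        mul_le_mul_of_nonneg_left step (inv_nonneg.mpr hK0.le)
    _ = (η₀ ⬝ᵥ η₀) * (γ⁻¹ * ((K : ℝ))⁻¹) := by ring
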